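/- Let X be a metrizable topological space and let E be an H₁-retract of X. Then E is a Gδ-set in X (a countable intersection of open sets). -/
import Mathlib


/-- A set is an Fσ-set if it is a countable union of closed sets. -/
def IsFsigma {X : Type*} [TopologicalSpace X] (A : Set X) : Prop :=
  ∃ F : ℕ → Set X, (∀ n, IsClosed (F n)) ∧ A = ⋃ n, F n

/-- A mapping is of the first Lebesgue class if the preimage of every open set is Fσ. -/
def LebesgueClassOne {X Y : Type*} [TopologicalSpace X] [TopologicalSpace Y] (g : X → Y) : Prop :=
  ∀ V : Set Y, IsOpen V → IsFsigma (g ⁻¹' V)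

/-- `E` is an H₁-retract of `X` if there is a first Lebesgue class map `r : X → E`
fixing the points of `E`. -/
def IsH1Retract {X : Type*} [TopologicalSpace X] (E : Set X) : Prop :=
  ∃ r : X → E, (∀ x : E, r x = x) ∧ LebesgueClassOne r

/-- An H₁-retract of a metrizable space is a Gδ-set. -/
theorem isGδ_of_isH1Retract {X : Type*} [TopologicalSpace X]
    [TopologicalSpace.MetrizableSpace X] {E : Set X}
    (h : IsH1Retract E) : IsGδ E := by
  letI : MetricSpace X := TopologicalSpace.metrizableSpaceMetric X
  obtain ⟨r, hr, hcl⟩ := h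
  -- for each n, a locally finite refinement of the cover by small balls,
  -- together with the Fσ decomposition of the relevant preimages
  have key : ∀ n : ℕ, ∃ (v : X → Set X) (F : X → ℕ → Set X),
      LocallyFinite v ∧ (⋃ c, v c = Set.univ) ∧
      (∀ c, v c ⊆ Metric.ball c ((1 / (n + 1)) / 2)) ∧
      (∀ c m, IsClosed (F c m)) ∧
      (∀ c, r ⁻¹' {e : E | (1 / (n + 1) : ℝ) < dist (e : X) c} = ⋃ m, F c m) := by
    intro n
    have hpos : (0 : ℝ) < (1 / (n + 1)) / 2 := by positivity
    obtain ⟨v, _vo, vU, vlf, vsub⟩ :=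
      precise_refinement (fun c : X => Metric.ball c ((1 / (n + 1)) / 2))
        (fun c => Metric.isOpen_ball)
        (by
          apply Set.eq_univ_of_forall
          intro x
          exact Set.mem_iUnion.2 ⟨x, Metric.mem_ball_self hpos⟩)
    have hFs : ∀ c : X, IsFsigma (r ⁻¹' {e : E | (1 / (n + 1) : ℝ) < dist (e : X) c}) := by
      intro c
      apply hcl
      have ho : IsOpen {y : X | (1 / (n + 1) : ℝ) < dist y c} :=
        isOpen_lt continuous_const (continuous_id.dist continuous_const)
      exact ho.preimage continuous_subtype_val
    choose F hFc hFU using hFs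
    exact ⟨v, F, vlf, vU, vsub, hFc, hFU⟩
  choose v F hlf hU hsub hFcl hFeq using key
  set C : ℕ × ℕ → Set X := fun p => ⋃ c, closure (v p.1 c) ∩ F p.1 c p.2 with hC
  have hCclosed : ∀ p, IsClosed (C p) := by
    intro p
    have h1 : LocallyFinite fun c => closure (v p.1 c) ∩ F p.1 c p.2 :=
      (hlf p.1).closure.subset fun c => Set.inter_subset_left
    exact h1.isClosed_iUnion fun c => isClosed_closure.inter (hFcl p.1 c p.2)
  have hEc : Eᶜ = ⋃ p : ℕ × ℕ, C p := by
    ext x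
    simp only [Set.mem_compl_iff, Set.mem_iUnion, hC]
    constructor
    · intro hx
      have hne : x ≠ (r x : X) := by
        intro hxx
        exact hx (hxx ▸ (r x).2)
      have hδ : 0 < dist x (r x : X) := dist_pos.2 hne
      obtain ⟨n, hn⟩ := exists_nat_one_div_lt (half_pos hδ)
      have hxcov : x ∈ ⋃ c, v n c := (hU n).symm ▸ Set.mem_univ x
      obtain ⟨c, hc⟩ := Set.mem_iUnion.1 hxcov
      have hxc : dist x c < (1 / (n + 1)) / 2 := by
        simpa [Metric.mem_ball] using hsub n c hc
      have hr' : (1 / (n + 1) : ℝ) < dist ((r x : X)) c := by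
        have htri : dist x (r x : X) ≤ dist x c + dist c (r x : X) := dist_triangle _ _ _
        have hsym : dist c (r x : X) = dist ((r x : X)) c := dist_comm _ _
        nlinarith [hn, hxc, htri, hsym]
      have hmem : x ∈ r ⁻¹' {e : E | (1 / (n + 1) : ℝ) < dist (e : X) c} := hr'
      rw [hFeq n c] at hmem
      obtain ⟨m, hm⟩ := Set.mem_iUnion.1 hmem
      exact ⟨(n, m), ⟨c, subset_closure hc, hm⟩⟩
    · rintro ⟨⟨n, m⟩, hp⟩
      obtain ⟨c, hc1, hc2⟩ := hp
      have hx2 : (1 / (n + 1) : ℝ) < dist ((r x : X)) c := by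
        have hmem : x ∈ ⋃ m, F n c m := Set.mem_iUnion.2 ⟨m, hc2⟩
        rw [← hFeq n c] at hmem
        exact hmem
      have hx1 : dist x c ≤ (1 / (n + 1)) / 2 := by
        have hsb : closure (v n c) ⊆ Metric.closedBall c ((1 / (n + 1)) / 2) :=
          closure_minimal ((hsub n c).trans Metric.ball_subset_closedBall)
            Metric.isClosed_closedBall
        simpa [Metric.mem_closedBall] using hsb hc1
      intro hxE
      have hfix : r x = ⟨x, hxE⟩ := hr ⟨x, hxE⟩
      rw [hfix] at hx2
      simp only at hx2
      have hhalf : (0 : ℝ) < 1 / (n + 1) := by positivity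
      linarith
  have hE : E = ⋂ p : ℕ × ℕ, (C p)ᶜ := by
    rw [← Set.compl_iUnion, ← hEc, compl_compl]
  rw [hE]
  exact IsGδ.iInter_of_isOpen fun p => (hCclosed p).isOpen_compl
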